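/- Let p be a prime, q = p^r with r ≥ 2, and let θ be the automorphism of 𝔽_q given by θ(a) = a^{p^s} with 1 ≤ s ≤ r−1. Let g_0, ..., g_k ∈ 𝔽_q with g_k ≠ 0, k ≥ 1, n > k, and let C ⊆ 𝔽_q^n be the θ-module code generated by g(t) = ∑_{i=0}^{k} g_i t^i in 𝔽_q[t;θ]. Assume q^{[k]_s} − 1 ≥ [n]_s (equivalently, k ≥ log_{p^s}[1 + ((p^s − 1)/r)·log_p(((p^s)^n + p^s − 2)/(p^s − 1))]). Let E be a field extension of 𝔽_q with |E| = q^{[k]_s} and let ω be a generator of the cyclic group E*. Suppose there exist integers l ≥ 0, Δ ≥ 2, and c with gcd(c, q^{[k]_s} − 1) = 1 such that the [p^s]-polynomial g^{[]_s}(X) = ∑_{i=0}^{k} g_i·X^{[i]_s}, viewed in E[X], satisfies g^{[]_s}(ω^{l+ci}) = 0 for all i = 0, 1, ..., Δ−2. Then every nonzero codeword of C has Hamming weight at least Δ, i.e., d(C) ≥ Δ. -/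
import Mathlib


/-- `br p s i = [i]_s = 1 + p^s + p^{2s} + ⋯ + p^{(i-1)s} = ((p^s)^i - 1)/(p^s - 1)`. -/
def br (p s i : ℕ) : ℕ := ∑ j ∈ Finset.range i, (p ^ s) ^ j

/-- `genVec n θ a j` is the coefficient vector of `t^j · a(t)` in `𝔽_q[t;θ]`:
it has entry `θ^j(a_i)` in position `i + j` and `0` in positions `< j`. -/
def genVec (n : ℕ) {F : Type*} [Field F] (θ : F ≃+* F) (a : ℕ → F) (j : ℕ) :
    Fin n → F :=
  fun idx => if j ≤ idx.val then (⇑θ)^[j] (a (idx.val - j)) else 0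

lemma br_add (p s j i : ℕ) : br p s (j + i) = br p s j + p ^ (s * j) * br p s i := by
  induction i with
  | zero => simp [br]
  | succ i ih =>
    rw [← Nat.add_assoc]
    unfold br at *
    rw [Finset.sum_range_succ, ih, Finset.sum_range_succ, Nat.mul_add, ← Nat.add_assoc]
    congr 1
    rw [pow_add, ← pow_mul]

lemma br_strictMono {p : ℕ} (hp : 0 < p) (s : ℕ) : StrictMono (br p s) := by
  apply strictMono_nat_of_lt_succ
  intro i
  unfold br
  rw [Finset.sum_range_succ]
  exact Nat.lt_add_of_pos_right (pow_pos (pow_pos hp s) i)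

/-- lower bound on the distance: let `C ⊆ 𝔽_q^n` be the
θ-module code generated by `g(t)` of degree `k`, with `q = p^r`,
`θ(a) = a^{p^s}` and `q^{[k]_s} - 1 ≥ [n]_s`. If `ω` generates `E*` with
`|E| = q^{[k]_s}`, `gcd(c, q^{[k]_s} - 1) = 1`, and the `[p^s]`-polynomial
`g^{[]ₛ}` vanishes at `ω^{l+ci}` for `i = 0, …, Δ-2`, then every nonzero
codeword of `C` has Hamming weight at least `Δ`. -/
theorem stmt_13 {p r s : ℕ} (hp : p.Prime) (hr : 2 ≤ r) (hs1 : 1 ≤ s)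
    (hs2 : s ≤ r - 1)
    {F : Type*} [Field F] [Fintype F] [DecidableEq F]
    (hF : Fintype.card F = p ^ r)
    (θ : F ≃+* F) (hθ : ∀ a : F, θ a = a ^ p ^ s)
    (g : ℕ → F) (k n : ℕ) (hk : 1 ≤ k) (hkn : k < n)
    (hgk : g k ≠ 0) (hgtop : ∀ i, k < i → g i = 0)
    (hbound : br p s n ≤ (p ^ r) ^ br p s k - 1)
    {E : Type*} [Field E] [Fintype E] [Algebra F E]
    (hE : Fintype.card E = (p ^ r) ^ br p s k)
    (ω : Eˣ) (hω : ∀ u : Eˣ, u ∈ Subgroup.zpowers ω)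
    (l Δ c : ℕ) (hΔ : 2 ≤ Δ)
    (hc : Nat.gcd c ((p ^ r) ^ br p s k - 1) = 1)
    (hroots : ∀ i < Δ - 1,
      Polynomial.aeval ((ω : E) ^ (l + c * i))
        (∑ i' ∈ Finset.range (k + 1),
          Polynomial.C (g i') * Polynomial.X ^ br p s i') = 0)
    (v : Fin n → F)
    (hv : v ∈ Submodule.span F {u : Fin n → F | ∃ j < n - k, u = genVec n θ g j})
    (hv0 : v ≠ 0) :
    Δ ≤ hammingNorm v := by
  classical
  by_contra hlt
  push_neg at hlt
  have hp2 : 2 ≤ p := hp.two_le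
  have hbrk : 0 < br p s k := by
    have := br_strictMono hp.pos s (show 0 < k by omega)
    simpa [br] using this
  -- characteristic of E
  haveI : CharP E p := by
    have h0 : ((Fintype.card E : E)) = 0 := Nat.cast_card_eq_zero E
    rw [hE] at h0
    push_cast at h0
    have h1 : ((p : E)) ^ (r * br p s k) = 0 := by
      rw [pow_mul]; exact h0
    have h2 : ((p : E)) = 0 := by
      have := pow_eq_zero_iff (n := r * br p s k) (by positivity) |>.mp h1
      exact this
    exact (CharP.charP_iff_prime_eq_zero hp).2 h2
  haveI : Fact p.Prime := ⟨hp⟩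
  -- express v as a combination of the generators
  have hsetr : {u : Fin n → F | ∃ j < n - k, u = genVec n θ g j}
      = Set.range (fun j : Fin (n - k) => genVec n θ g j.val) := by
    ext u
    constructor
    · rintro ⟨j, hj, rfl⟩; exact ⟨⟨j, hj⟩, rfl⟩
    · rintro ⟨j, rfl⟩; exact ⟨j.val, j.isLt, rfl⟩
  rw [hsetr] at hv
  obtain ⟨a, ha⟩ := (Submodule.mem_span_range_iff_exists_fun F).mp hv
  -- iterate of θ under the algebra map
  have hiter : ∀ (j : ℕ) (b : F),
      algebraMap F E ((⇑θ)^[j] b) = algebraMap F E b ^ p ^ (s * j) := by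
    intro j
    induction j with
    | zero => intro b; simp
    | succ j ih =>
      intro b
      rw [Function.iterate_succ_apply', hθ, map_pow, ih, ← pow_mul, ← pow_add,
        Nat.mul_succ]
  -- evaluation of the generators
  have hgen : ∀ (β : E) (j : ℕ), j < n - k →
      ∑ idx : Fin n, algebraMap F E (genVec n θ g j idx) * β ^ br p s idx.val
        = β ^ br p s j *
          (∑ i' ∈ Finset.range (k + 1), algebraMap F E (g i') * β ^ br p s i')
            ^ p ^ (s * j) := by
    intro β j hj
    have step1 : ∑ idx : Fin n, algebraMap F E (genVec n θ g j idx) * β ^ br p s idx.val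
        = ∑ m ∈ Finset.range n,
            (if j ≤ m then algebraMap F E ((⇑θ)^[j] (g (m - j))) * β ^ br p s m else 0) := by
      rw [← Fin.sum_univ_eq_sum_range]
      apply Finset.sum_congr rfl
      intro idx _
      simp [genVec, apply_ite (algebraMap F E), ite_mul]
    rw [step1]
    rw [← Finset.sum_filter]
    have hfil : (Finset.range n).filter (fun m => j ≤ m) = Finset.Ico j n := by
      ext m
      simp [Finset.mem_Ico, and_comm]
    rw [hfil, Finset.sum_Ico_eq_sum_range]
    have step2 : ∀ i ∈ Finset.range (n - j),
        algebraMap F E ((⇑θ)^[j] (g (j + i - j))) * β ^ br p s (j + i)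
          = β ^ br p s j * (algebraMap F E (g i) * β ^ br p s i) ^ p ^ (s * j) := by
      intro i _
      rw [Nat.add_sub_cancel_left, hiter, br_add, pow_add, mul_pow, pow_mul β,
        ← pow_mul β (p ^ (s * j)), Nat.mul_comm (p ^ (s * j))]
      ring
    rw [Finset.sum_congr rfl step2, ← Finset.mul_sum]
    congr 1
    rw [← sum_pow_char_pow]
    congr 1
    apply (Finset.sum_subset _ _).symm
    · intro i hi
      simp only [Finset.mem_range] at hi ⊢
      omega
    · intro i hi hni
      simp only [Finset.mem_range] at hi hni
      have : g i = 0 := hgtop i (by omega)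
      simp [this]
  -- the key vanishing property for codewords
  have key : ∀ i, i < Δ - 1 →
      ∑ idx : Fin n, algebraMap F E (v idx) * ((ω : E) ^ (l + c * i)) ^ br p s idx.val
        = 0 := by
    intro i hi
    set β : E := (ω : E) ^ (l + c * i) with hβ
    have hG : ∑ i' ∈ Finset.range (k + 1), algebraMap F E (g i') * β ^ br p s i' = 0 := by
      have := hroots i hi
      simpa [map_sum, Polynomial.aeval_C, Polynomial.aeval_X_pow] using this
    have hrw : ∑ idx : Fin n, algebraMap F E (v idx) * β ^ br p s idx.val
        = ∑ j : Fin (n - k), algebraMap F E (a j) *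
            ∑ idx : Fin n, algebraMap F E (genVec n θ g j.val idx) * β ^ br p s idx.val := by
      rw [← ha]
      simp only [Finset.sum_apply, Pi.smul_apply, smul_eq_mul, map_sum, map_mul,
        Finset.sum_mul, Finset.mul_sum]
      rw [Finset.sum_comm]
      apply Finset.sum_congr rfl
      intro idx _
      apply Finset.sum_congr rfl
      intro j _
      ring
    rw [hrw]
    apply Finset.sum_eq_zero
    intro j _
    rw [hgen β j.val j.isLt, hG, zero_pow (by positivity), mul_zero, mul_zero]
  -- the support of v
  set T : Finset (Fin n) := Finset.univ.filter (fun i => v i ≠ 0) with hT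
  have hTcard : hammingNorm v = T.card := rfl
  have hT0 : 0 < T.card := by
    rcases Function.ne_iff.mp hv0 with ⟨i, hi⟩
    have hi' : v i ≠ 0 := by simpa using hi
    apply Finset.card_pos.mpr
    exact ⟨i, by simp [hT, hi']⟩
  set w : ℕ := T.card with hw
  have hwΔ : w ≤ Δ - 1 := by omega
  -- order of ω
  have horder : orderOf ω = (p ^ r) ^ br p s k - 1 := by
    rw [orderOf_eq_card_of_forall_mem_zpowers hω, Nat.card_units,
      Nat.card_eq_fintype_card, hE]
  have hQ : br p s n ≤ (p ^ r) ^ br p s k - 1 := hbound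
  -- enumeration of the support
  set e : Fin w → T := fun m => T.equivFin.symm m with he
  have heinj : Function.Injective e := T.equivFin.symm.injective
  set x : Fin w → E := fun m => (ω : E) ^ (c * br p s ((e m : Fin n)).val) with hx
  set y : Fin w → E :=
    fun m => algebraMap F E (v (e m)) * (ω : E) ^ (l * br p s ((e m : Fin n)).val) with hy
  -- injectivity of x
  have hxinj : Function.Injective x := by
    intro m m' hxe
    have hbr_lt : ∀ m'' : Fin w, br p s ((e m'' : Fin n)).val < (p ^ r) ^ br p s k - 1 := by
      intro m''
      exact lt_of_lt_of_le (br_strictMono hp.pos s (e m'' : Fin n).isLt) hQ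
    have hu : ω ^ (c * br p s ((e m : Fin n)).val)
        = ω ^ (c * br p s ((e m' : Fin n)).val) := by
      apply Units.ext
      simpa [hx, Units.val_pow_eq_pow_val] using hxe
    have hmod := pow_eq_pow_iff_modEq.mp hu
    rw [horder] at hmod
    have hmod2 := Nat.ModEq.cancel_left_of_coprime
      (by rw [Nat.gcd_comm]; exact hc) hmod
    have hbeq : br p s ((e m : Fin n)).val = br p s ((e m' : Fin n)).val := by
      have h1 := hbr_lt m
      have h2 := hbr_lt m'
      have := hmod2
      unfold Nat.ModEq at this
      rwa [Nat.mod_eq_of_lt h1, Nat.mod_eq_of_lt h2] at this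
    have hval : ((e m : Fin n)).val = ((e m' : Fin n)).val :=
      (br_strictMono hp.pos s).injective hbeq
    apply heinj
    exact Subtype.ext (Fin.ext hval)
  -- the Vandermonde system
  set A : Matrix (Fin w) (Fin w) E := Matrix.of fun j m => x m ^ (j : ℕ) with hA
  have hAy : A.mulVec y = 0 := by
    funext j
    have hj : (j : ℕ) < Δ - 1 := lt_of_lt_of_le j.isLt hwΔ
    have hk := key j hj
    -- restrict the sum to the support
    have hsup : ∑ idx ∈ T, algebraMap F E (v idx)
          * ((ω : E) ^ (l + c * (j : ℕ))) ^ br p s idx.val = 0 := by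
      rw [← hk]
      apply Finset.sum_subset (Finset.subset_univ T)
      intro idx _ hidx
      have : v idx = 0 := by
        by_contra hne
        exact hidx (by simp [hT, hne])
      simp [this]
    have hsum : ∑ m : Fin w, algebraMap F E (v (e m))
          * ((ω : E) ^ (l + c * (j : ℕ))) ^ br p s ((e m : Fin n)).val = 0 := by
      rw [← hsup, ← Finset.sum_coe_sort T
        (fun idx => algebraMap F E (v idx) * ((ω : E) ^ (l + c * (j : ℕ))) ^ br p s idx.val)]
      exact Equiv.sum_comp T.equivFin.symm
        (fun t : T => algebraMap F E (v t) * ((ω : E) ^ (l + c * (j : ℕ))) ^ br p s (t : Fin n).val)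
    simp only [Matrix.mulVec, dotProduct, Pi.zero_apply, hA, Matrix.of_apply]
    rw [← hsum]
    apply Finset.sum_congr rfl
    intro m _
    simp only [hx, hy]
    rw [← pow_mul, ← pow_mul,
      show (l + c * (j : ℕ)) * br p s ((e m : Fin n)).val
          = l * br p s ((e m : Fin n)).val + c * br p s ((e m : Fin n)).val * (j : ℕ) from by
        ring,
      pow_add]
    ring
  have hdet : A.det ≠ 0 := by
    have hAv : A = (Matrix.vandermonde x).transpose := rfl
    rw [hAv, Matrix.det_transpose]
    exact Matrix.det_vandermonde_ne_zero_iff.mpr hxinj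
  have hy0 : y = 0 := Matrix.eq_zero_of_mulVec_eq_zero hdet hAy
  -- contradiction
  have m0 : Fin w := ⟨0, hT0⟩
  have hvm0 : v (e m0) ≠ 0 := by
    have hmem : (e m0 : Fin n) ∈ T := (e m0).2
    exact (Finset.mem_filter.mp hmem).2
  have : y m0 = 0 := by rw [hy0]; rfl
  rw [hy] at this
  exact (mul_ne_zero ((map_ne_zero (algebraMap F E)).mpr hvm0)
    (pow_ne_zero _ (Units.ne_zero ω))) this
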